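/- Every Mathias generic set G (n-generic for all n, or even just 3-generic) is cohesive: for every computably enumerable set W, either G ⊆* W or G ⊆* complement of W. -/

import Mathlib

open Classical

namespace MathiasGenerics

/-- Codes for oracle partial recursive functions. -/
inductive OCode : Type
  | zero : OCode
  | succ : OCode
  | left : OCode
  | right : OCode
  | oracle : OCode
  | pair : OCode → OCode → OCode
  | comp : OCode → OCode → OCode
  | prec : OCode → OCode → OCode
  | rfind' : OCode → OCode

/-- Evaluation of an oracle code relative to an oracle `g`. -/
def evalo (g : ℕ →. ℕ) : OCode → ℕ →. ℕ
  | .zero => fun _ => Part.some 0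
  | .succ => fun n => Part.some (n + 1)
  | .left => fun n => Part.some n.unpair.1
  | .right => fun n => Part.some n.unpair.2
  | .oracle => g
  | .pair cf cg => fun n => Nat.pair <$> evalo g cf n <*> evalo g cg n
  | .comp cf cg => fun n => evalo g cg n >>= evalo g cf
  | .prec cf cg =>
    Nat.unpaired fun a n =>
      n.rec (evalo g cf a) fun y IH => do
        let i ← IH
        evalo g cg (Nat.pair a (Nat.pair y i))
  | .rfind' cf =>
    Nat.unpaired fun a m =>
      (Nat.rfind fun n => (fun m => m = 0) <$> evalo g cf (Nat.pair a (n + m))).map (· + m)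

/-- An effective numbering of oracle codes. -/
def encodeOC : OCode → ℕ
  | .zero => 0
  | .succ => 1
  | .left => 2
  | .right => 3
  | .oracle => 4
  | .pair a b => 4 * Nat.pair (encodeOC a) (encodeOC b) + 5
  | .comp a b => 4 * Nat.pair (encodeOC a) (encodeOC b) + 6
  | .prec a b => 4 * Nat.pair (encodeOC a) (encodeOC b) + 7
  | .rfind' a => 4 * encodeOC a + 8

noncomputable def decodeOC (n : ℕ) : OCode :=
  if h : ∃ c, encodeOC c = n then h.choose else OCode.zero

/-- Characteristic function of a set of naturals. -/
noncomputable def χ (A : Set ℕ) : ℕ → ℕ := fun n => if n ∈ A then 1 else 0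

/-- The characteristic function viewed as a partial function. -/
noncomputable def χp (A : Set ℕ) : ℕ →. ℕ := fun n => Part.some (χ A n)

/-- `f` is partial recursive in the oracle `g`. -/
def PartRecIn (g : ℕ →. ℕ) (f : ℕ →. ℕ) : Prop := ∃ c : OCode, ∀ n, evalo g c n = f n

/-- `f` (total) is recursive in the set `B`. -/
def FunRecIn (B : Set ℕ) (f : ℕ → ℕ) : Prop := PartRecIn (χp B) (fun n => Part.some (f n))

/-- Turing reducibility between sets of naturals. -/
def TR (A B : Set ℕ) : Prop := PartRecIn (χp B) (χp A)

/-- Turing equivalence. -/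
def TE (A B : Set ℕ) : Prop := TR A B ∧ TR B A

/-- The Turing jump of a set. -/
noncomputable def jump (A : Set ℕ) : Set ℕ :=
  {e | ∃ c : OCode, encodeOC c = e ∧ (evalo (χp A) c e).Dom}

/-- Iterated Turing jump. -/
noncomputable def jumpIter (A : Set ℕ) : ℕ → Set ℕ
  | 0 => A
  | n + 1 => jump (jumpIter A n)

/-- `∅^(n)`. -/
noncomputable def emptyJump (n : ℕ) : Set ℕ := jumpIter ∅ n

/-- Effective join (recursive join) of two sets. -/
def join (A B : Set ℕ) : Set ℕ :=
  {n | (n % 2 = 0 ∧ n / 2 ∈ A) ∨ (n % 2 = 1 ∧ n / 2 ∈ B)}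

/-- `S` is computably enumerable in `B`. -/
def CeIn (B : Set ℕ) (S : Set ℕ) : Prop :=
  ∃ c : OCode, S = {n | (evalo (χp B) c n).Dom}

/-- `S` is `Σ⁰ₙ`. -/
noncomputable def Sigma0 : ℕ → Set ℕ → Prop
  | 0 => fun S => TR S ∅
  | n + 1 => fun S => CeIn (emptyJump n) S

/-- `S` is `Π⁰ₙ`. -/
noncomputable def Pi0 (n : ℕ) (S : Set ℕ) : Prop := Sigma0 n Sᶜ

/-- `S` is `Δ⁰ₙ`. -/
noncomputable def Delta0 (n : ℕ) (S : Set ℕ) : Prop := Sigma0 n S ∧ Pi0 n S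

/-- A set is computable iff Turing reducible to `∅`. -/
def ComputableSet (S : Set ℕ) : Prop := TR S ∅

/-! ### Mathias conditions, coded by naturals

A (code of a) pre-condition is a pair `⟨d, e⟩` where `d` canonically codes the
finite set `D` and `e` is a code of a total `{0,1}`-valued computable function
whose set of `1`s is `E`. -/

/-- The finite part `D` of the coded condition `p`. -/
def condD (p : ℕ) : Finset ℕ := Denumerable.ofNat (Finset ℕ) p.unpair.1

/-- The infinite part `E` of the coded condition `p`. -/
noncomputable def condE (p : ℕ) : Set ℕ :=
  {x | evalo (χp ∅) (decodeOC p.unpair.2) x = Part.some 1}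

/-- The function computing `E` is total and `{0,1}`-valued (so `E` is computable). -/
noncomputable def condETotal (p : ℕ) : Prop :=
  ∀ x, evalo (χp ∅) (decodeOC p.unpair.2) x = Part.some 0 ∨
    evalo (χp ∅) (decodeOC p.unpair.2) x = Part.some 1

/-- `p` codes a Mathias pre-condition `(D, E)`: `E` computable and `max D < min E`. -/
noncomputable def IsPreCond (p : ℕ) : Prop :=
  condETotal p ∧ ∀ d ∈ condD p, ∀ x ∈ condE p, d < x

/-- `p` codes a Mathias condition: a pre-condition with `E` infinite. -/
noncomputable def IsCond (p : ℕ) : Prop := IsPreCond p ∧ (condE p).Infinite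

/-- `q` extends `p`. -/
noncomputable def Ext (q p : ℕ) : Prop :=
  condD p ⊆ condD q ∧ ↑(condD q) ⊆ ↑(condD p) ∪ condE p ∧ condE q ⊆ condE p

/-- The set `A` satisfies the coded condition `p`. -/
noncomputable def Sat (A : Set ℕ) (p : ℕ) : Prop :=
  ↑(condD p) ⊆ A ∧ A ⊆ ↑(condD p) ∪ condE p

/-- `A` meets the set of coded conditions `C`. -/
noncomputable def Meets (A : Set ℕ) (C : Set ℕ) : Prop := ∃ p ∈ C, Sat A p

/-- `A` avoids `C`: it satisfies a condition with no extension in `C`. -/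
noncomputable def Avoids (A : Set ℕ) (C : Set ℕ) : Prop :=
  ∃ p, IsCond p ∧ Sat A p ∧ ∀ q, IsCond q → Ext q p → q ∉ C

/-- `C` is a set of conditions. -/
noncomputable def CondSet (C : Set ℕ) : Prop := ∀ p ∈ C, IsCond p

/-- `C` is a set of pre-conditions. -/
noncomputable def PreCondSet (C : Set ℕ) : Prop := ∀ p ∈ C, IsPreCond p

/-- `G` is Mathias `n`-generic. -/
noncomputable def MGen (n : ℕ) (G : Set ℕ) : Prop :=
  ∀ C : Set ℕ, Sigma0 n C → CondSet C → Meets G C ∨ Avoids G C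

/-- `C` is a dense set of conditions. -/
noncomputable def DenseCond (C : Set ℕ) : Prop := ∀ p, IsCond p → ∃ q ∈ C, Ext q p

/-- `G` is weakly Mathias `n`-generic. -/
noncomputable def WMGen (n : ℕ) (G : Set ℕ) : Prop :=
  ∀ C : Set ℕ, Sigma0 n C → CondSet C → DenseCond C → Meets G C

/-- `G` is strongly Mathias `n`-generic: for every `Σ⁰ₙ` set `C` of pre-conditions,
either `G` meets some condition in `C` or `G` meets the set of conditions not
extended by any condition in `C`. -/
noncomputable def SMGen (n : ℕ) (G : Set ℕ) : Prop :=
  ∀ C : Set ℕ, Sigma0 n C → PreCondSet C →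
    (∃ p ∈ C, IsCond p ∧ Sat G p) ∨
    (∃ p, IsCond p ∧ Sat G p ∧ ∀ q ∈ C, IsCond q → ¬ Ext q p)

/-- `A` is hyperimmune relative to `X`: `A` is infinite and its principal function
is not dominated by any `X`-recursive function. -/
noncomputable def HypImmRel (A X : Set ℕ) : Prop :=
  A.Infinite ∧ ∀ f : ℕ → ℕ, FunRecIn X f → ∃ n, f n < Nat.nth (· ∈ A) n

/-- `A` is bi-immune: neither `A` nor its complement has an infinite computable subset. -/
def BiImmune (A : Set ℕ) : Prop :=
  (∀ S : Set ℕ, ComputableSet S → S.Infinite → ¬ S ⊆ A) ∧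
    (∀ S : Set ℕ, ComputableSet S → S.Infinite → ¬ S ⊆ Aᶜ)

/-! ### Cohen forcing -/

/-- The binary string `σ` is an initial segment of (the characteristic function of) `A`. -/
def StrSat (A : Set ℕ) (σ : List Bool) : Prop :=
  ∀ i : Fin σ.length, (σ.get i = true ↔ (i : ℕ) ∈ A)

/-- A set of binary strings is `Σ⁰ₙ` (via the canonical coding). -/
noncomputable def Sigma0Str (n : ℕ) (C : Set (List Bool)) : Prop :=
  Sigma0 n (Encodable.encode '' C)

/-- `A` is Cohen `n`-generic. -/
noncomputable def CGen (n : ℕ) (A : Set ℕ) : Prop :=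
  ∀ C : Set (List Bool), Sigma0Str n C →
    (∃ σ ∈ C, StrSat A σ) ∨ (∃ σ, StrSat A σ ∧ ∀ τ ∈ C, ¬ σ <+: τ)

/-! ### Arithmetical formulas in one free set variable, and Mathias forcing -/

/-- Numeric terms: de Bruijn variables and numerals. -/
inductive Trm : Type
  | var : ℕ → Trm
  | cst : ℕ → Trm

/-- Value of a term under a valuation. -/
def tval (ρ : ℕ → ℕ) : Trm → ℕ
  | .var i => ρ i
  | .cst n => n

/-- Prenex formulas in one free set variable `X`.  The quantifier-free matrix is
given in disjunctive normal form: a disjunct `(P, N)` asserts `t ∈ X` for `t ∈ P`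
and `t ∉ X` for `t ∈ N`. -/
inductive Form : Type
  | dnf : List (List Trm × List Trm) → Form
  | ex : Form → Form
  | all : Form → Form

/-- Push a value onto a de Bruijn valuation. -/
def push (a : ℕ) (ρ : ℕ → ℕ) : ℕ → ℕ
  | 0 => a
  | i + 1 => ρ i

/-- Truth of a formula at the set `A` under the valuation `ρ`. -/
def FEval (ρ : ℕ → ℕ) (A : Set ℕ) : Form → Prop
  | .dnf ds => ∃ d ∈ ds, (∀ t ∈ d.1, tval ρ t ∈ A) ∧ (∀ t ∈ d.2, tval ρ t ∉ A)
  | .ex φ => ∃ a, FEval (push a ρ) A φ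
  | .all φ => ∀ a, FEval (push a ρ) A φ

/-- Strong Mathias forcing of `φ(G)` by the coded condition `p`, under valuation `ρ`. -/
noncomputable def Forces (p : ℕ) (ρ : ℕ → ℕ) : Form → Prop
  | .dnf ds => ∃ d ∈ ds, (∀ t ∈ d.1, tval ρ t ∈ condD p) ∧
      (∀ t ∈ d.2, tval ρ t ∉ (↑(condD p) ∪ condE p : Set ℕ))
  | .ex φ => ∃ a, Forces p (push a ρ) φ
  | .all φ => ∀ q, IsCond q → Ext q p → ∀ a, ∃ r, IsCond r ∧ Ext r q ∧ Forces r (push a ρ) φ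

/-- Classification of prenex formulas: `lev true n φ` means `φ` is `Σ⁰ₙ`,
`lev false n φ` means `φ` is `Π⁰ₙ`. -/
def lev : Bool → ℕ → Form → Prop
  | _, 0, .dnf _ => True
  | true, n + 1, .ex φ => lev false n φ
  | false, n + 1, .all φ => lev true n φ
  | _, _, _ => False

/-- `φ` is a `Σ⁰ₙ` formula. -/
def IsSig (n : ℕ) (φ : Form) : Prop := lev true n φ

/-- `φ` is a `Π⁰ₙ` formula. -/
def IsPiF (n : ℕ) (φ : Form) : Prop := lev false n φ

/-- All free variables of `φ` are `< k`. -/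
def ClosedB : ℕ → Form → Prop
  | k, .dnf ds => ∀ d ∈ ds, ∀ t ∈ d.1 ++ d.2, ∀ i, t = Trm.var i → i < k
  | k, .ex φ => ClosedB (k + 1) φ
  | k, .all φ => ClosedB (k + 1) φ

/-- `φ` has no free number variables (only the free set variable `X`). -/
def ClosedF (φ : Form) : Prop := ClosedB 0 φ

/-- The zero valuation. -/
def ρ0 : ℕ → ℕ := fun _ => 0

/-- Numbering of lists. -/
def encList {α : Type} (f : α → ℕ) : List α → ℕ
  | [] => 0
  | a :: l => Nat.pair (f a) (encList f l) + 1

/-- Numbering of terms. -/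
def encTrm : Trm → ℕ
  | .var i => 2 * i
  | .cst n => 2 * n + 1

/-- Numbering of formulas. -/
def encForm : Form → ℕ
  | .dnf ds => 3 * encList (fun d => Nat.pair (encList encTrm d.1) (encList encTrm d.2)) ds
  | .ex φ => 3 * encForm φ + 1
  | .all φ => 3 * encForm φ + 2


/-! ### Auxiliary development -/

open Nat.Partrec (Code)

/-- Embedding of mathlib partial recursive codes into oracle codes. -/
def embedC : Code → OCode
  | Code.zero => .zero
  | Code.succ => .succ
  | Code.left => .left
  | Code.right => .right
  | Code.pair a b => .pair (embedC a) (embedC b)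
  | Code.comp a b => .comp (embedC a) (embedC b)
  | Code.prec a b => .prec (embedC a) (embedC b)
  | Code.rfind' a => .rfind' (embedC a)

theorem evalo_embedC (g : ℕ →. ℕ) : ∀ c : Code, evalo g (embedC c) = c.eval := by
  intro c
  induction c <;> simp [embedC, evalo, Nat.Partrec.Code.eval, *] <;> rfl

/-- Projection of oracle codes to mathlib codes, sending the oracle to `zero`. -/
def projC : OCode → Code
  | .zero => Code.zero
  | .succ => Code.succ
  | .left => Code.left
  | .right => Code.right
  | .oracle => Code.zero
  | .pair a b => Code.pair (projC a) (projC b)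
  | .comp a b => Code.comp (projC a) (projC b)
  | .prec a b => Code.prec (projC a) (projC b)
  | .rfind' a => Code.rfind' (projC a)

theorem χp_empty : χp (∅ : Set ℕ) = fun _ => Part.some 0 := by
  funext n; simp [χp, χ]

theorem eval_projC : ∀ c : OCode, (projC c).eval = evalo (χp ∅) c := by
  intro c
  induction c <;>
    simp [projC, evalo, Nat.Partrec.Code.eval, χp_empty, *] <;> rfl

/-- A computable decoding of naturals into oracle codes. -/
def decOC : ℕ → OCode
  | 0 => .zero
  | 1 => .succ
  | 2 => .left
  | 3 => .right
  | 4 => .oracle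
  | n + 5 =>
    let m := n / 4
    have hm : m < n + 5 :=
      lt_of_le_of_lt (Nat.div_le_self _ _) (Nat.lt_succ_of_le (Nat.le_add_right _ _))
    have _m1 : m.unpair.1 < n + 5 := lt_of_le_of_lt m.unpair_left_le hm
    have _m2 : m.unpair.2 < n + 5 := lt_of_le_of_lt m.unpair_right_le hm
    match n % 4 with
    | 0 => .pair (decOC m.unpair.1) (decOC m.unpair.2)
    | 1 => .comp (decOC m.unpair.1) (decOC m.unpair.2)
    | 2 => .prec (decOC m.unpair.1) (decOC m.unpair.2)
    | _ => .rfind' (decOC m)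
decreasing_by
  all_goals
    have := Nat.unpair_left_le (n / 4)
    have := Nat.unpair_right_le (n / 4)
    have := Nat.div_le_self n 4
    omega

theorem encodeOC_decOC : ∀ n, encodeOC (decOC n) = n
  | 0 => by simp [decOC, encodeOC]
  | 1 => by simp [decOC, encodeOC]
  | 2 => by simp [decOC, encodeOC]
  | 3 => by simp [decOC, encodeOC]
  | 4 => by simp [decOC, encodeOC]
  | n + 5 => by
    let m := n / 4
    have hm : m < n + 5 :=
      lt_of_le_of_lt (Nat.div_le_self _ _) (Nat.lt_succ_of_le (Nat.le_add_right _ _))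
    have _m1 : m.unpair.1 < n + 5 := lt_of_le_of_lt m.unpair_left_le hm
    have _m2 : m.unpair.2 < n + 5 := lt_of_le_of_lt m.unpair_right_le hm
    have IH := encodeOC_decOC m
    have IH1 := encodeOC_decOC m.unpair.1
    have IH2 := encodeOC_decOC m.unpair.2
    have hdm : n % 4 = 0 ∨ n % 4 = 1 ∨ n % 4 = 2 ∨ n % 4 = 3 := by omega
    have hnd := Nat.div_add_mod n 4
    simp only [m] at IH IH1 IH2
    rcases hdm with h | h | h | h <;>
      simp only [decOC, h] <;>
      simp [encodeOC, IH, IH1, IH2, Nat.pair_unpair] <;>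
      omega
decreasing_by
  all_goals
    have := Nat.unpair_left_le (n / 4)
    have := Nat.unpair_right_le (n / 4)
    have := Nat.div_le_self n 4
    omega

theorem decOC_encodeOC : ∀ c, decOC (encodeOC c) = c := by
  intro c
  induction c with
  | zero => simp [encodeOC, decOC]
  | succ => simp [encodeOC, decOC]
  | left => simp [encodeOC, decOC]
  | right => simp [encodeOC, decOC]
  | oracle => simp [encodeOC, decOC]
  | pair a b iha ihb =>
      show decOC (4 * Nat.pair (encodeOC a) (encodeOC b) + 5) = _
      have h1 : (4 * Nat.pair (encodeOC a) (encodeOC b)) % 4 = 0 := by omega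
      have h2 : (4 * Nat.pair (encodeOC a) (encodeOC b)) / 4
          = Nat.pair (encodeOC a) (encodeOC b) := by omega
      simp [decOC, h1, h2, iha, ihb]
  | comp a b iha ihb =>
      have h0 : encodeOC (OCode.comp a b)
          = (4 * Nat.pair (encodeOC a) (encodeOC b) + 1) + 5 := by
        show 4 * Nat.pair (encodeOC a) (encodeOC b) + 6 = _; omega
      rw [h0]
      have h1 : (4 * Nat.pair (encodeOC a) (encodeOC b) + 1) % 4 = 1 := by omega
      have h2 : (4 * Nat.pair (encodeOC a) (encodeOC b) + 1) / 4
          = Nat.pair (encodeOC a) (encodeOC b) := by omega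
      simp [decOC, h1, h2, iha, ihb]
  | prec a b iha ihb =>
      have h0 : encodeOC (OCode.prec a b)
          = (4 * Nat.pair (encodeOC a) (encodeOC b) + 2) + 5 := by
        show 4 * Nat.pair (encodeOC a) (encodeOC b) + 7 = _; omega
      rw [h0]
      have h1 : (4 * Nat.pair (encodeOC a) (encodeOC b) + 2) % 4 = 2 := by omega
      have h2 : (4 * Nat.pair (encodeOC a) (encodeOC b) + 2) / 4
          = Nat.pair (encodeOC a) (encodeOC b) := by omega
      simp [decOC, h1, h2, iha, ihb]
  | rfind' a iha =>
      have h0 : encodeOC (OCode.rfind' a) = (4 * encodeOC a + 3) + 5 := by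
        show 4 * encodeOC a + 8 = _; omega
      rw [h0]
      have h1 : (4 * encodeOC a + 3) % 4 = 3 := by omega
      have h2 : (4 * encodeOC a + 3) / 4 = encodeOC a := by omega
      simp [decOC, h1, h2, iha]

theorem encodeOC_inj : Function.Injective encodeOC :=
  Function.LeftInverse.injective decOC_encodeOC

theorem decodeOC_eq_decOC : decodeOC = decOC := by
  funext n
  have h : ∃ c, encodeOC c = n := ⟨decOC n, encodeOC_decOC n⟩
  have := h.choose_spec
  rw [decodeOC, dif_pos h]
  exact encodeOC_inj (by rw [this, encodeOC_decOC])

theorem decodeOC_encodeOC (c : OCode) : decodeOC (encodeOC c) = c := by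
  rw [decodeOC_eq_decOC]; exact decOC_encodeOC c


/-! ### Basic oracle codes -/

/-- Oracle code for the constant function with value `n`. -/
def constOC : ℕ → OCode
  | 0 => .zero
  | n + 1 => .comp .succ (constOC n)

theorem evalo_constOC (g : ℕ →. ℕ) : ∀ n x, evalo g (constOC n) x = Part.some n
  | 0, _ => rfl
  | n + 1, x => by
      simp [constOC, evalo, evalo_constOC g n x]

/-- Oracle code for the identity. -/
def idOC : OCode := .pair .left .right

theorem evalo_idOC (g : ℕ →. ℕ) (x : ℕ) : evalo g idOC x = Part.some x := by
  simp [idOC, evalo, Seq.seq]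

theorem part_some_bind' (f : ℕ →. ℕ) (a : ℕ) : (Part.some a >>= f) = f a :=
  Part.bind_some a f

theorem evalo_comp (g : ℕ →. ℕ) (cf cg : OCode) (n : ℕ) :
    evalo g (.comp cf cg) n = evalo g cg n >>= evalo g cf := rfl

/-- Oracle code halting exactly on input `0`. -/
def haltIffZeroOC : OCode := .comp (.rfind' .left) (.pair idOC (constOC 0))

theorem haltIffZeroOC_dom (g : ℕ →. ℕ) (y : ℕ) :
    (evalo g haltIffZeroOC y).Dom ↔ y = 0 := by
  have h1 : evalo g (.pair idOC (constOC 0)) y = Part.some (Nat.pair y 0) := by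
    simp [evalo, evalo_idOC, evalo_constOC, Seq.seq]
  rw [haltIffZeroOC, evalo_comp, h1, part_some_bind']
  have h2 : ∀ n : ℕ, evalo g .left (Nat.pair y (n + 0)) = Part.some y := by
    intro n; simp [evalo]
  rw [show evalo g (.rfind' .left) (Nat.pair y 0)
      = (Nat.rfind fun n => (fun m => m = 0) <$> evalo g .left (Nat.pair y (n + 0))).map
        (· + 0) from by simp [evalo, Nat.unpaired]]
  simp only [h2]
  constructor
  · intro h
    have h' : (Nat.rfind fun n => (fun m => m = 0) <$> Part.some y).Dom := h
    obtain ⟨n, hn, -⟩ := Nat.rfind_dom.1 h'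
    simpa using hn
  · intro hy
    subst hy
    have h' : (Nat.rfind fun n => (fun m => m = 0) <$> Part.some 0).Dom :=
      Nat.rfind_dom.2 ⟨0, by simp, fun {m} hm => by simp⟩
    exact h'

/-- The index of the code `c` hard-wired with input `n`. -/
def idxOC (c : OCode) (n : ℕ) : ℕ := encodeOC (.comp c (constOC n))

theorem evalo_comp_const (g : ℕ →. ℕ) (c : OCode) (n x : ℕ) :
    evalo g (.comp c (constOC n)) x = evalo g c n := by
  rw [evalo_comp, evalo_constOC]; exact Part.bind_some _ _

theorem idxOC_mem_jump (A : Set ℕ) (c : OCode) (n : ℕ) :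
    idxOC c n ∈ jump A ↔ (evalo (χp A) c n).Dom := by
  constructor
  · rintro ⟨c', hc', hdom⟩
    have : c' = .comp c (constOC n) := encodeOC_inj hc'
    subst this
    rwa [evalo_comp_const] at hdom
  · intro h
    exact ⟨_, rfl, by rwa [evalo_comp_const]⟩

/-- Numeric version of `encodeOC ∘ constOC`. -/
def encConst : ℕ → ℕ := fun n => encodeOC (constOC n)

theorem encConst_succ (n : ℕ) : encConst (n + 1) = 4 * Nat.pair 1 (encConst n) + 6 := rfl

theorem primrec_encConst : Primrec encConst := by
  have : Primrec (Nat.rec (motive := fun _ => ℕ) 0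
      (fun _ ih => 4 * Nat.pair 1 ih + 6)) := by
    refine Primrec.nat_rec₁ 0 ?_
    have : Primrec fun p : ℕ × ℕ => 4 * Nat.pair 1 p.2 + 6 :=
      Primrec.nat_add.comp
        (Primrec.nat_mul.comp (Primrec.const 4)
          (Primrec₂.natPair.comp (Primrec.const 1) Primrec.snd))
        (Primrec.const 6)
    exact this
  refine this.of_eq fun n => ?_
  induction n with
  | zero => rfl
  | succ n ih => rw [encConst_succ, ← ih]

theorem idxOC_eq (c : OCode) (n : ℕ) :
    idxOC c n = 4 * Nat.pair (encodeOC c) (encConst n) + 6 := rfl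

theorem primrec_idxOC (c : OCode) : Primrec (idxOC c) := by
  simp only [funext (idxOC_eq c)]
  exact Primrec.nat_add.comp
    (Primrec.nat_mul.comp (Primrec.const 4)
      (Primrec₂.natPair.comp (Primrec.const (encodeOC c)) primrec_encConst))
    (Primrec.const 6)

/-- Any computable function is computed by an oracle code, relative to every oracle. -/
theorem exists_ocode_of_computable {f : ℕ → ℕ} (hf : Computable f) :
    ∃ oc : OCode, ∀ (g : ℕ →. ℕ) (x : ℕ), evalo g oc x = Part.some (f x) := by
  have h1 : Nat.Partrec fun n => Part.some (f n) := Partrec.nat_iff.1 hf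
  obtain ⟨c, hc⟩ := Nat.Partrec.Code.exists_code.1 h1
  exact ⟨embedC c, fun g x => by rw [evalo_embedC, hc]⟩

/-! ### A computable universal translation -/

open Nat.Partrec.Code in
/-- Translation of our numbering of `OCode` (with oracle read as `zero`) into the
mathlib numbering of `Nat.Partrec.Code`. -/
def trN : ℕ → ℕ := fun n => encodeCode (projC (decOC n))

/-- One step of the strong recursion computing `trN`. -/
def trStep : List ℕ → ℕ := fun L =>
  let n := L.length
  if n = 4 then 0
  else if n < 4 then n
  else
    let k := n - 5
    let m := k / 4
    let r := k % 4
    let a := L.getD m.unpair.1 0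
    let b := L.getD m.unpair.2 0
    let c := L.getD m 0
    if r = 0 then 2 * (2 * Nat.pair a b) + 4
    else if r = 1 then 2 * (2 * Nat.pair a b + 1) + 4
    else if r = 2 then 2 * (2 * Nat.pair a b) + 1 + 4
    else 2 * (2 * c + 1) + 1 + 4

theorem primrec_trStep : Primrec trStep := by
  have hL : Primrec (@List.length ℕ) := Primrec.list_length
  have hm : Primrec fun L : List ℕ => (L.length - 5) / 4 :=
    Primrec.nat_div.comp (Primrec.nat_sub.comp hL (Primrec.const 5)) (Primrec.const 4)
  have hr : Primrec fun L : List ℕ => (L.length - 5) % 4 :=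
    Primrec.nat_mod.comp (Primrec.nat_sub.comp hL (Primrec.const 5)) (Primrec.const 4)
  have ha : Primrec fun L : List ℕ => L.getD ((L.length - 5) / 4).unpair.1 0 :=
    (Primrec.list_getD 0).comp Primrec.id (Primrec.fst.comp (Primrec.unpair.comp hm))
  have hb : Primrec fun L : List ℕ => L.getD ((L.length - 5) / 4).unpair.2 0 :=
    (Primrec.list_getD 0).comp Primrec.id (Primrec.snd.comp (Primrec.unpair.comp hm))
  have hc : Primrec fun L : List ℕ => L.getD ((L.length - 5) / 4) 0 :=
    (Primrec.list_getD 0).comp Primrec.id hm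
  have hpair : Primrec fun L : List ℕ =>
      Nat.pair (L.getD ((L.length - 5) / 4).unpair.1 0) (L.getD ((L.length - 5) / 4).unpair.2 0) :=
    Primrec₂.natPair.comp ha hb
  refine Primrec.ite (Primrec.eq.comp hL (Primrec.const 4)) (Primrec.const 0) ?_
  refine Primrec.ite (Primrec.nat_lt.comp hL (Primrec.const 4)) hL ?_
  refine Primrec.ite (Primrec.eq.comp hr (Primrec.const 0))
    (Primrec.nat_add.comp
      (Primrec.nat_mul.comp (Primrec.const 2) (Primrec.nat_mul.comp (Primrec.const 2) hpair))
      (Primrec.const 4)) ?_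
  refine Primrec.ite (Primrec.eq.comp hr (Primrec.const 1))
    (Primrec.nat_add.comp
      (Primrec.nat_mul.comp (Primrec.const 2)
        (Primrec.nat_add.comp (Primrec.nat_mul.comp (Primrec.const 2) hpair) (Primrec.const 1)))
      (Primrec.const 4)) ?_
  refine Primrec.ite (Primrec.eq.comp hr (Primrec.const 2))
    (Primrec.nat_add.comp
      (Primrec.nat_add.comp
        (Primrec.nat_mul.comp (Primrec.const 2) (Primrec.nat_mul.comp (Primrec.const 2) hpair))
        (Primrec.const 1))
      (Primrec.const 4)) ?_
  exact Primrec.nat_add.comp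
    (Primrec.nat_add.comp
      (Primrec.nat_mul.comp (Primrec.const 2)
        (Primrec.nat_add.comp (Primrec.nat_mul.comp (Primrec.const 2) hc) (Primrec.const 1)))
      (Primrec.const 1))
    (Primrec.const 4)

theorem getD_map_range (f : ℕ → ℕ) (n i : ℕ) (h : i < n) :
    ((List.range n).map f).getD i 0 = f i := by
  rw [List.getD_eq_getElem?_getD, List.getElem?_map, List.getElem?_range h]
  rfl

theorem trStep_spec : ∀ n, trStep ((List.range n).map trN) = trN n := by
  intro n
  have hlen : ((List.range n).map trN).length = n := by simp
  match n with
  | 0 => simp [trStep, trN, decOC, projC, Nat.Partrec.Code.encodeCode]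
  | 1 => simp [trStep, trN, decOC, projC, Nat.Partrec.Code.encodeCode]
  | 2 => simp [trStep, trN, decOC, projC, Nat.Partrec.Code.encodeCode]
  | 3 => simp [trStep, trN, decOC, projC, Nat.Partrec.Code.encodeCode]
  | 4 => simp [trStep, trN, decOC, projC, Nat.Partrec.Code.encodeCode]
  | k + 5 =>
    have h4 : ¬ (k + 5 = 4) := by omega
    have h4' : ¬ (k + 5 < 4) := by omega
    have hk : k + 5 - 5 = k := by omega
    have hm : k / 4 ≤ k := Nat.div_le_self _ _
    have hm1 : (k / 4).unpair.1 < k + 5 :=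
      lt_of_le_of_lt (le_trans (k / 4).unpair_left_le hm) (by omega)
    have hm2 : (k / 4).unpair.2 < k + 5 :=
      lt_of_le_of_lt (le_trans (k / 4).unpair_right_le hm) (by omega)
    have hmm : k / 4 < k + 5 := by omega
    have ga := getD_map_range trN (k + 5) (k / 4).unpair.1 hm1
    have gb := getD_map_range trN (k + 5) (k / 4).unpair.2 hm2
    have gc := getD_map_range trN (k + 5) (k / 4) hmm
    have hdm : k % 4 = 0 ∨ k % 4 = 1 ∨ k % 4 = 2 ∨ k % 4 = 3 := by omega
    rcases hdm with h | h | h | h <;>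
      simp only [trStep, hlen, if_neg h4, if_neg h4', hk, h, ga, gb, gc] <;>
      simp [trN, decOC, h, projC, Nat.Partrec.Code.encodeCode]

theorem computable_trN : Computable trN := by
  have hg : Computable₂ (fun (_ : Unit) (L : List ℕ) => (some (trStep L) : Option ℕ)) :=
    (Computable.option_some.comp (primrec_trStep.to_comp.comp Computable.snd))
  have := Computable.nat_strong_rec (fun (_ : Unit) n => trN n) hg
    (fun _ n => congrArg some (trStep_spec n))
  exact this.comp (Computable.const ()) Computable.id

open Nat.Partrec.Code in
theorem eval_trN (e x : ℕ) :
    (Denumerable.ofNat Code (trN e)).eval x = evalo (χp ∅) (decodeOC e) x := by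
  rw [decodeOC_eq_decOC, ← eval_projC]
  unfold trN
  rw [← encodeCode_eq, Denumerable.ofNat_encode]

/-! ### The Σ⁰₃ condition set for cohesiveness -/

open Nat.Partrec (Code)
open Nat.Partrec.Code

/-- The mathlib code computing the `E`-part of the coded condition `p`. -/
def FdecOC (p : ℕ) : Code := Denumerable.ofNat Code (trN p.unpair.2)

theorem eval_FdecOC (p x : ℕ) :
    (FdecOC p).eval x = evalo (χp ∅) (decodeOC p.unpair.2) x := eval_trN _ _

theorem computable_FdecOC : Computable FdecOC :=
  (Primrec.ofNat Code).to_comp.comp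
    (computable_trN.comp (Primrec.snd.comp Primrec.unpair).to_comp)

theorem mem_condE_iff (p x : ℕ) :
    x ∈ condE p ↔ ∃ s, evaln s (FdecOC p) x = some 1 := by
  have : x ∈ condE p ↔ (FdecOC p).eval x = Part.some 1 := by
    rw [eval_FdecOC]; exact Iff.rfl
  rw [this, Part.eq_some_iff, evaln_complete]
  simp [Option.mem_def]

theorem condETotal_iff (p : ℕ) :
    condETotal p ↔ ∀ x, ∃ s, (evaln s (FdecOC p) x = some 0 ∨ evaln s (FdecOC p) x = some 1) := by
  constructor
  · intro h x
    rcases h x with h0 | h1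
    · have : (FdecOC p).eval x = Part.some 0 := by rw [eval_FdecOC]; exact h0
      obtain ⟨s, hs⟩ := evaln_complete.1 (Part.eq_some_iff.1 this)
      exact ⟨s, Or.inl hs⟩
    · have : (FdecOC p).eval x = Part.some 1 := by rw [eval_FdecOC]; exact h1
      obtain ⟨s, hs⟩ := evaln_complete.1 (Part.eq_some_iff.1 this)
      exact ⟨s, Or.inr hs⟩
  · intro h x
    rcases h x with ⟨s, hs | hs⟩
    · left
      rw [← eval_FdecOC]
      exact Part.eq_some_iff.2 (evaln_sound hs)
    · right
      rw [← eval_FdecOC]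
      exact Part.eq_some_iff.2 (evaln_sound hs)

theorem memW_iff (w : OCode) (x : ℕ) :
    (evalo (χp ∅) w x).Dom ↔ ∃ t, (evaln t (projC w) x).isSome = true := by
  rw [← eval_projC, Part.dom_iff_mem]
  constructor
  · rintro ⟨v, hv⟩
    obtain ⟨t, ht⟩ := evaln_complete.1 hv
    exact ⟨t, by simp [Option.mem_def.1 ht]⟩
  · rintro ⟨t, ht⟩
    obtain ⟨v, hv⟩ := Option.isSome_iff_exists.1 ht
    exact ⟨v, evaln_sound hv⟩

/-- Clause: totality test. -/
def clT (F : Code) (x s : ℕ) : Bool :=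
  decide (evaln s F x = some 0) || decide (evaln s F x = some 1)

theorem clT_iff {F x s} : clT F x s = true ↔
    (evaln s F x = some 0 ∨ evaln s F x = some 1) := by simp [clT]

/-- Clause: order bound test. -/
def clO (F : Code) (d xs : ℕ) : Bool :=
  !decide (evaln xs.unpair.2 F xs.unpair.1 = some 1) || decide (d < xs.unpair.1)

theorem clO_iff {F d xs} : clO F d xs = true ↔
    (evaln xs.unpair.2 F xs.unpair.1 = some 1 → d < xs.unpair.1) := by
  by_cases h : evaln xs.unpair.2 F xs.unpair.1 = some 1 <;> simp [clO, h]

/-- Clause: infinity test. -/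
def clI (F : Code) (n xs : ℕ) : Bool :=
  decide (n < xs.unpair.1) && decide (evaln xs.unpair.2 F xs.unpair.1 = some 1)

theorem clI_iff {F n xs} : clI F n xs = true ↔
    (n < xs.unpair.1 ∧ evaln xs.unpair.2 F xs.unpair.1 = some 1) := by simp [clI]

/-- Clause: `E ⊆ W` test. -/
def clW (F cw : Code) (xs t : ℕ) : Bool :=
  !decide (evaln xs.unpair.2 F xs.unpair.1 = some 1) || (evaln t cw xs.unpair.1).isSome

theorem clW_iff {F cw xs t} : clW F cw xs t = true ↔
    (evaln xs.unpair.2 F xs.unpair.1 = some 1 → (evaln t cw xs.unpair.1).isSome = true) := by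
  by_cases h : evaln xs.unpair.2 F xs.unpair.1 = some 1 <;> simp [clW, h]

/-- Clause: `E ⊆ Wᶜ` test. -/
def clNW (F cw : Code) (xst : ℕ) : Bool :=
  !(decide (evaln xst.unpair.1.unpair.2 F xst.unpair.1.unpair.1 = some 1)
    && (evaln xst.unpair.2 cw xst.unpair.1.unpair.1).isSome)

theorem clNW_iff {F cw xst} : clNW F cw xst = true ↔
    ¬(evaln xst.unpair.1.unpair.2 F xst.unpair.1.unpair.1 = some 1
      ∧ (evaln xst.unpair.2 cw xst.unpair.1.unpair.1).isSome = true) := by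
  simp [clNW]
  tauto

/-- The decidable matrix of the `Σ⁰₃` description. -/
def PhiB (w : OCode) (m b : ℕ) : Bool :=
  clT (FdecOC m.unpair.1) m.unpair.2.unpair.1.unpair.1 b.unpair.1
  && clO (FdecOC m.unpair.1) m.unpair.1.unpair.1 m.unpair.2.unpair.1.unpair.2
  && clI (FdecOC m.unpair.1) m.unpair.2.unpair.2.unpair.1 b.unpair.2.unpair.1
  && (clW (FdecOC m.unpair.1) (projC w) m.unpair.2.unpair.2.unpair.2.unpair.1 b.unpair.2.unpair.2
      || clNW (FdecOC m.unpair.1) (projC w) m.unpair.2.unpair.2.unpair.2.unpair.2)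

/-- The condition set used for cohesiveness w.r.t. the c.e. set coded by `w`. -/
def CohC (w : OCode) : Set ℕ :=
  {p | condETotal p ∧ (∀ x ∈ condE p, p.unpair.1 < x) ∧
    (∀ n, ∃ x, n < x ∧ x ∈ condE p) ∧
    ((∀ x ∈ condE p, (evalo (χp ∅) w x).Dom) ∨ (∀ x ∈ condE p, ¬ (evalo (χp ∅) w x).Dom))}

theorem CohC_iff (w : OCode) (p : ℕ) :
    p ∈ CohC w ↔ ∀ a : ℕ, ∃ b : ℕ, PhiB w (Nat.pair p a) b = true := by
  constructor
  · rintro ⟨hT, hO, hI, hS⟩ a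
    obtain ⟨s1, hs1⟩ := (condETotal_iff p).1 hT a.unpair.1.unpair.1
    obtain ⟨x3, hx3gt, hx3⟩ := hI a.unpair.2.unpair.1
    obtain ⟨s3, hs3⟩ := (mem_condE_iff p x3).1 hx3
    have hb3 : ∃ b3, (clW (FdecOC p) (projC w) a.unpair.2.unpair.2.unpair.1 b3 = true)
        ∨ clNW (FdecOC p) (projC w) a.unpair.2.unpair.2.unpair.2 = true := by
      rcases hS with hS | hS
      · by_cases h4 : evaln a.unpair.2.unpair.2.unpair.1.unpair.2 (FdecOC p)
            a.unpair.2.unpair.2.unpair.1.unpair.1 = some 1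
        · have hx : a.unpair.2.unpair.2.unpair.1.unpair.1 ∈ condE p :=
            (mem_condE_iff p _).2 ⟨_, h4⟩
          obtain ⟨t, ht⟩ := (memW_iff w _).1 (hS _ hx)
          exact ⟨t, Or.inl (clW_iff.2 fun _ => ht)⟩
        · exact ⟨0, Or.inl (clW_iff.2 fun h => absurd h h4)⟩
      · refine ⟨0, Or.inr (clNW_iff.2 ?_)⟩
        rintro ⟨h5, h5W⟩
        have hx : a.unpair.2.unpair.2.unpair.2.unpair.1.unpair.1 ∈ condE p :=
          (mem_condE_iff p _).2 ⟨_, h5⟩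
        exact hS _ hx ((memW_iff w _).2 ⟨_, h5W⟩)
    obtain ⟨b3, hb3⟩ := hb3
    refine ⟨Nat.pair s1 (Nat.pair (Nat.pair x3 s3) b3), ?_⟩
    simp only [PhiB, Nat.unpair_pair, Bool.and_eq_true, Bool.or_eq_true]
    refine ⟨⟨⟨clT_iff.2 hs1, clO_iff.2 fun h => hO _ ((mem_condE_iff p _).2 ⟨_, h⟩)⟩,
      clI_iff.2 (by rw [Nat.unpair_pair]; exact ⟨hx3gt, hs3⟩)⟩, hb3⟩
  · intro h
    have hT : condETotal p := (condETotal_iff p).2 fun x => by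
      obtain ⟨b, hb⟩ := h (Nat.pair (Nat.pair x 0) 0)
      simp only [PhiB, Nat.unpair_pair, Bool.and_eq_true] at hb
      exact ⟨b.unpair.1, clT_iff.1 hb.1.1.1⟩
    have hO : ∀ x ∈ condE p, p.unpair.1 < x := by
      intro x hx
      obtain ⟨s, hs⟩ := (mem_condE_iff p x).1 hx
      obtain ⟨b, hb⟩ := h (Nat.pair (Nat.pair 0 (Nat.pair x s)) 0)
      simp only [PhiB, Nat.unpair_pair, Bool.and_eq_true] at hb
      have := clO_iff.1 hb.1.1.2
      rw [Nat.unpair_pair] at this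
      exact this hs
    have hI : ∀ n, ∃ x, n < x ∧ x ∈ condE p := by
      intro n
      obtain ⟨b, hb⟩ := h (Nat.pair (Nat.pair 0 0) (Nat.pair n 0))
      simp only [PhiB, Nat.unpair_pair, Bool.and_eq_true] at hb
      obtain ⟨hgt, hev⟩ := clI_iff.1 hb.1.2
      exact ⟨_, hgt, (mem_condE_iff p _).2 ⟨_, hev⟩⟩
    refine ⟨hT, hO, hI, ?_⟩
    by_cases hfound : ∃ x, x ∈ condE p ∧ (evalo (χp ∅) w x).Dom
    · obtain ⟨x0, hx0E, hx0W⟩ := hfound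
      obtain ⟨s0, hs0⟩ := (mem_condE_iff p x0).1 hx0E
      obtain ⟨t0, ht0⟩ := (memW_iff w x0).1 hx0W
      left
      intro x hx
      obtain ⟨s, hs⟩ := (mem_condE_iff p x).1 hx
      obtain ⟨b, hb⟩ := h (Nat.pair (Nat.pair 0 0)
        (Nat.pair 0 (Nat.pair (Nat.pair x s) (Nat.pair (Nat.pair x0 s0) t0))))
      simp only [PhiB, Nat.unpair_pair, Bool.and_eq_true, Bool.or_eq_true] at hb
      rcases hb.2 with h4 | h5
      · have := clW_iff.1 h4
        rw [Nat.unpair_pair] at this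
        exact (memW_iff w x).2 ⟨_, this hs⟩
      · exfalso
        have := clNW_iff.1 h5
        rw [Nat.unpair_pair] at this
        exact this ⟨by rw [Nat.unpair_pair]; exact hs0, by rw [Nat.unpair_pair]; exact ht0⟩
    · exact Or.inr fun x hx hD => hfound ⟨x, hx, hD⟩

theorem computable_PhiB (w : OCode) : Computable₂ (PhiB w) := by
  classical
  have hu : Primrec (Nat.unpair) := Primrec.unpair
  -- components over z : ℕ × ℕ, z = (m, b)
  have hm : Computable fun z : ℕ × ℕ => z.1 := Computable.fst
  have hb : Computable fun z : ℕ × ℕ => z.2 := Computable.snd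
  have hF : Computable fun z : ℕ × ℕ => FdecOC z.1 := computable_FdecOC.comp hm
  have hcw : Computable fun _ : ℕ × ℕ => projC w := Computable.const _
  have u1 : Computable fun n : ℕ => n.unpair.1 := (Primrec.fst.comp Primrec.unpair).to_comp
  have u2 : Computable fun n : ℕ => n.unpair.2 := (Primrec.snd.comp Primrec.unpair).to_comp
  have hevaln : ∀ {s x : ℕ × ℕ → ℕ} {cd : ℕ × ℕ → Code}, Computable s → Computable cd →
      Computable x → Computable fun z => evaln (s z) (cd z) (x z) := by
    intro s x cd hs hcd hx
    exact primrec_evaln.to_comp.comp ((hs.pair hcd).pair hx)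
  have heq1 : ∀ {f : ℕ × ℕ → Option ℕ} (k : Option ℕ), Computable f →
      Computable fun z => decide (f z = k) := by
    intro f k hf
    exact Primrec.eq.decide.to_comp.comp hf (Computable.const k)
  have hlt : ∀ {f g : ℕ × ℕ → ℕ}, Computable f → Computable g →
      Computable fun z => decide (f z < g z) := by
    intro f g hf hg
    exact Primrec.nat_lt.decide.to_comp.comp hf hg
  have hor : ∀ {f g : ℕ × ℕ → Bool}, Computable f → Computable g →
      Computable fun z => (f z || g z) := by
    intro f g hf hg
    exact Primrec.or.to_comp.comp hf hg
  have hand : ∀ {f g : ℕ × ℕ → Bool}, Computable f → Computable g →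
      Computable fun z => (f z && g z) := by
    intro f g hf hg
    exact Primrec.and.to_comp.comp hf hg
  have hnot : ∀ {f : ℕ × ℕ → Bool}, Computable f → Computable fun z => !(f z) := by
    intro f hf
    exact Primrec.not.to_comp.comp hf
  have hsome : ∀ {f : ℕ × ℕ → Option ℕ}, Computable f →
      Computable fun z => (f z).isSome := by
    intro f hf
    exact Primrec.option_isSome.to_comp.comp hf
  -- clause T
  have h1 : Computable fun z : ℕ × ℕ =>
      clT (FdecOC z.1.unpair.1) z.1.unpair.2.unpair.1.unpair.1 z.2.unpair.1 := by
    have he : Computable fun z : ℕ × ℕ =>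
        evaln z.2.unpair.1 (FdecOC z.1.unpair.1) z.1.unpair.2.unpair.1.unpair.1 :=
      hevaln (u1.comp hb) (computable_FdecOC.comp (u1.comp hm))
        (u1.comp (u1.comp (u2.comp hm)))
    exact hor (heq1 (some 0) he) (heq1 (some 1) he)
  have h2 : Computable fun z : ℕ × ℕ =>
      clO (FdecOC z.1.unpair.1) z.1.unpair.1.unpair.1 z.1.unpair.2.unpair.1.unpair.2 := by
    have hxs : Computable fun z : ℕ × ℕ => z.1.unpair.2.unpair.1.unpair.2 :=
      u2.comp (u1.comp (u2.comp hm))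
    have he : Computable fun z : ℕ × ℕ =>
        evaln z.1.unpair.2.unpair.1.unpair.2.unpair.2 (FdecOC z.1.unpair.1)
          z.1.unpair.2.unpair.1.unpair.2.unpair.1 :=
      hevaln (u2.comp hxs) (computable_FdecOC.comp (u1.comp hm)) (u1.comp hxs)
    exact hor (hnot (heq1 (some 1) he))
      (hlt (u1.comp (u1.comp hm)) (u1.comp hxs))
  have h3 : Computable fun z : ℕ × ℕ =>
      clI (FdecOC z.1.unpair.1) z.1.unpair.2.unpair.2.unpair.1 z.2.unpair.2.unpair.1 := by
    have hxs : Computable fun z : ℕ × ℕ => z.2.unpair.2.unpair.1 :=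
      u1.comp (u2.comp hb)
    have he : Computable fun z : ℕ × ℕ =>
        evaln z.2.unpair.2.unpair.1.unpair.2 (FdecOC z.1.unpair.1)
          z.2.unpair.2.unpair.1.unpair.1 :=
      hevaln (u2.comp hxs) (computable_FdecOC.comp (u1.comp hm)) (u1.comp hxs)
    exact hand (hlt (u1.comp (u2.comp (u2.comp hm))) (u1.comp hxs)) (heq1 (some 1) he)
  have h4 : Computable fun z : ℕ × ℕ =>
      clW (FdecOC z.1.unpair.1) (projC w) z.1.unpair.2.unpair.2.unpair.2.unpair.1
        z.2.unpair.2.unpair.2 := by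
    have hxs : Computable fun z : ℕ × ℕ => z.1.unpair.2.unpair.2.unpair.2.unpair.1 :=
      u1.comp (u2.comp (u2.comp (u2.comp hm)))
    have he : Computable fun z : ℕ × ℕ =>
        evaln z.1.unpair.2.unpair.2.unpair.2.unpair.1.unpair.2 (FdecOC z.1.unpair.1)
          z.1.unpair.2.unpair.2.unpair.2.unpair.1.unpair.1 :=
      hevaln (u2.comp hxs) (computable_FdecOC.comp (u1.comp hm)) (u1.comp hxs)
    have hew : Computable fun z : ℕ × ℕ =>
        evaln z.2.unpair.2.unpair.2 (projC w) z.1.unpair.2.unpair.2.unpair.2.unpair.1.unpair.1 :=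
      hevaln (u2.comp (u2.comp hb)) hcw (u1.comp hxs)
    exact hor (hnot (heq1 (some 1) he)) (hsome hew)
  have h5 : Computable fun z : ℕ × ℕ =>
      clNW (FdecOC z.1.unpair.1) (projC w) z.1.unpair.2.unpair.2.unpair.2.unpair.2 := by
    have hxst : Computable fun z : ℕ × ℕ => z.1.unpair.2.unpair.2.unpair.2.unpair.2 :=
      u2.comp (u2.comp (u2.comp (u2.comp hm)))
    have he : Computable fun z : ℕ × ℕ =>
        evaln z.1.unpair.2.unpair.2.unpair.2.unpair.2.unpair.1.unpair.2 (FdecOC z.1.unpair.1)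
          z.1.unpair.2.unpair.2.unpair.2.unpair.2.unpair.1.unpair.1 :=
      hevaln (u2.comp (u1.comp hxst)) (computable_FdecOC.comp (u1.comp hm))
        (u1.comp (u1.comp hxst))
    have hew : Computable fun z : ℕ × ℕ =>
        evaln z.1.unpair.2.unpair.2.unpair.2.unpair.2.unpair.2 (projC w)
          z.1.unpair.2.unpair.2.unpair.2.unpair.2.unpair.1.unpair.1 :=
      hevaln (u2.comp hxst) hcw (u1.comp (u1.comp hxst))
    exact hnot (hand (heq1 (some 1) he) (hsome hew))
  exact (hand (hand (hand h1 h2) h3) (hor h4 h5) : Computable fun z : ℕ × ℕ => PhiB w z.1 z.2)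

theorem χ_eq_zero_iff (A : Set ℕ) (n : ℕ) : χ A n = 0 ↔ n ∉ A := by
  by_cases h : n ∈ A <;> simp [χ, h]

theorem emptyJump_two : emptyJump 2 = jump (jump ∅) := rfl

theorem sigma3_CohC (w : OCode) : Sigma0 3 (CohC w) := by
  obtain ⟨cS, hcS⟩ := Nat.Partrec.Code.exists_code.1
    (Partrec.nat_iff.1 (Partrec.rfind (computable_PhiB w).partrec₂))
  have hdomS : ∀ m, (evalo (χp ∅) (embedC cS) m).Dom ↔ ∃ b, PhiB w m b = true := by
    intro m
    rw [evalo_embedC, hcS, Nat.rfind_dom]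
    constructor
    · rintro ⟨n, hn, -⟩
      exact ⟨n, by simpa using hn⟩
    · rintro ⟨b, hb⟩
      exact ⟨b, by simpa using hb, fun {m} _ => trivial⟩
  obtain ⟨cIdxS, hcIdxS⟩ := exists_ocode_of_computable (primrec_idxOC (embedC cS)).to_comp
  have hc1 : ∀ p : ℕ,
      (evalo (χp (jump ∅))
        (.comp (.rfind' (.comp .oracle cIdxS)) (.pair idOC (constOC 0))) p).Dom ↔
      ∃ a, ¬ ∃ b, PhiB w (Nat.pair p a) b = true := by
    intro p
    have hpair : evalo (χp (jump ∅)) (.pair idOC (constOC 0)) p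
        = Part.some (Nat.pair p 0) := by
      simp [evalo, evalo_idOC, evalo_constOC, Seq.seq]
    rw [evalo_comp, hpair, part_some_bind']
    have hcf : ∀ n : ℕ, evalo (χp (jump ∅)) (.comp .oracle cIdxS) (Nat.pair p (n + 0))
        = Part.some (χ (jump ∅) (idxOC (embedC cS) (Nat.pair p n))) := by
      intro n
      rw [evalo_comp, hcIdxS, part_some_bind']
      rfl
    rw [show evalo (χp (jump ∅)) (.rfind' (.comp .oracle cIdxS)) (Nat.pair p 0)
        = (Nat.rfind fun n => (fun m => m = 0) <$>
            evalo (χp (jump ∅)) (.comp .oracle cIdxS) (Nat.pair p (n + 0))).map (· + 0)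
      from by simp [evalo, Nat.unpaired, Nat.unpair_pair]]
    simp only [hcf]
    constructor
    · intro h
      have h' : (Nat.rfind fun n => (fun m => m = 0) <$>
          Part.some (χ (jump ∅) (idxOC (embedC cS) (Nat.pair p n)))).Dom := h
      obtain ⟨n, hn, -⟩ := Nat.rfind_dom.1 h'
      refine ⟨n, fun hex => ?_⟩
      have h0 : χ (jump ∅) (idxOC (embedC cS) (Nat.pair p n)) = 0 := by simpa using hn
      exact (χ_eq_zero_iff _ _).1 h0
        ((idxOC_mem_jump _ _ _).2 ((hdomS _).2 hex))
    · rintro ⟨a, ha⟩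
      have h0 : χ (jump ∅) (idxOC (embedC cS) (Nat.pair p a)) = 0 :=
        (χ_eq_zero_iff _ _).2 fun hmem => ha ((hdomS _).1 ((idxOC_mem_jump _ _ _).1 hmem))
      have h' : (Nat.rfind fun n => (fun m => m = 0) <$>
          Part.some (χ (jump ∅) (idxOC (embedC cS) (Nat.pair p n)))).Dom :=
        Nat.rfind_dom.2 ⟨a, by simp [h0], fun {m} _ => trivial⟩
      exact h'
  obtain ⟨cJ, hcJ⟩ := exists_ocode_of_computable
    (primrec_idxOC (.comp (.rfind' (.comp .oracle cIdxS)) (.pair idOC (constOC 0)))).to_comp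
  show CeIn (emptyJump 2) (CohC w)
  refine ⟨.comp haltIffZeroOC (.comp .oracle cJ), Set.ext fun p => ?_⟩
  simp only [Set.mem_setOf_eq]
  rw [evalo_comp, evalo_comp, hcJ]
  simp only [part_some_bind']
  have horc : evalo (χp (emptyJump 2)) .oracle
      (idxOC (.comp (.rfind' (.comp .oracle cIdxS)) (.pair idOC (constOC 0))) p)
      = Part.some (χ (emptyJump 2)
        (idxOC (.comp (.rfind' (.comp .oracle cIdxS)) (.pair idOC (constOC 0))) p)) := rfl
  rw [horc]
  simp only [part_some_bind']
  rw [haltIffZeroOC_dom, χ_eq_zero_iff, emptyJump_two, idxOC_mem_jump, CohC_iff]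
  rw [hc1 p]
  constructor
  · rintro h ⟨a, ha⟩
    exact ha (h a)
  · intro h a
    by_contra hb
    exact h ⟨a, hb⟩

/-! ### `CohC` is a set of conditions, and the avoidance contradiction -/

theorem add_le_pair (a b : ℕ) : a + b ≤ Nat.pair a b := by
  rw [Nat.pair]
  split_ifs with h
  · have hb : 0 < b := by omega
    have : b ≤ b * b := Nat.le_mul_of_pos_left b hb
    omega
  · have : a * a ≥ 0 := Nat.zero_le _
    omega

theorem sum_length_le_encode : ∀ l : List ℕ, l.sum + l.length ≤ Encodable.encode l := by
  intro l
  induction l with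
  | nil => simp [Encodable.encode_list_nil]
  | cons a l ih =>
      rw [Encodable.encode_list_cons]
      have h := add_le_pair (Encodable.encode a) (Encodable.encode l)
      have ha : Encodable.encode a = a := Encodable.encode_nat a
      simp only [List.sum_cons, List.length_cons]
      omega

theorem mem_raise'_le : ∀ (l : List ℕ) (n d : ℕ), d ∈ Denumerable.raise' l n →
    d ≤ n + (l.sum + l.length) := by
  intro l
  induction l with
  | nil => intro n d hd; simp [Denumerable.raise'] at hd
  | cons a l ih =>
      intro n d hd
      rw [Denumerable.raise'] at hd
      rcases List.mem_cons.1 hd with h | h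
      · subst h; simp only [List.sum_cons, List.length_cons]; omega
      · have := ih (a + n + 1) d h
        simp only [List.sum_cons, List.length_cons]
        omega

theorem mem_ofNat_finset_le {m d : ℕ} (hd : d ∈ Denumerable.ofNat (Finset ℕ) m) : d ≤ m := by
  have hof : Denumerable.ofNat (Finset ℕ) m =
      Finset.map (Denumerable.eqv ℕ).symm.toEmbedding
        (Denumerable.raise'Finset (Denumerable.ofNat (List ℕ) m) 0) :=
    Denumerable.ofNat_of_decode rfl
  rw [hof] at hd
  obtain ⟨d', hd', hdd⟩ := Finset.mem_map.1 hd
  have hd'' : d' ∈ Denumerable.raise' (Denumerable.ofNat (List ℕ) m) 0 := hd'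
  have h1 := mem_raise'_le _ 0 d' hd''
  have h2 := sum_length_le_encode (Denumerable.ofNat (List ℕ) m)
  rw [Denumerable.encode_ofNat] at h2
  have hdd' : d = d' := by
    rw [← hdd]
    simp [Denumerable.eqv]
  omega

theorem condSet_CohC (w : OCode) : CondSet (CohC w) := by
  rintro p ⟨hT, hO, hI, _⟩
  refine ⟨⟨hT, ?_⟩, ?_⟩
  · intro d hd x hx
    exact lt_of_le_of_lt (mem_ofNat_finset_le hd) (hO x hx)
  · exact Set.infinite_of_forall_exists_gt fun n =>
      (hI n).imp fun x ⟨h1, h2⟩ => ⟨h2, h1⟩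

theorem χ_pos {A : Set ℕ} {x : ℕ} (h : x ∈ A) : χ A x = 1 := if_pos h

theorem χ_neg {A : Set ℕ} {x : ℕ} (h : x ∉ A) : χ A x = 0 := if_neg h

theorem avoid_contra (w : OCode) (p₀ : ℕ) (hpc : IsCond p₀)
    (hAv : ∀ q, IsCond q → Ext q p₀ → q ∉ CohC w)
    (A : Set ℕ) (oc : OCode)
    (hoc : ∀ (g : ℕ →. ℕ) (x : ℕ), evalo g oc x = Part.some (χ A x))
    (hsubE : A ⊆ condE p₀) (hinf : A.Infinite) (hgt : ∀ x ∈ A, p₀.unpair.1 < x)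
    (hSide : (∀ x ∈ A, (evalo (χp ∅) w x).Dom) ∨ (∀ x ∈ A, ¬(evalo (χp ∅) w x).Dom)) :
    False := by
  set q := Nat.pair p₀.unpair.1 (encodeOC oc) with hq
  have hD : condD q = condD p₀ := by
    simp only [condD, hq, Nat.unpair_pair]
  have hE : condE q = A := by
    ext x
    simp only [condE, hq, Nat.unpair_pair, decodeOC_encodeOC, Set.mem_setOf_eq, hoc]
    by_cases hx : x ∈ A <;> simp [hx, χ]
  have hTot : condETotal q := by
    intro x
    simp only [hq, Nat.unpair_pair, decodeOC_encodeOC, hoc]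
    by_cases hx : x ∈ A <;> simp [hx, χ]
  have hCond : IsCond q := by
    refine ⟨⟨hTot, ?_⟩, ?_⟩
    · intro d hd x hx
      rw [hD] at hd
      rw [hE] at hx
      exact hpc.1.2 d hd x (hsubE hx)
    · rw [hE]; exact hinf
  have hExt : Ext q p₀ := by
    refine ⟨by rw [hD], by rw [hD]; exact Set.subset_union_left, by rw [hE]; exact hsubE⟩
  refine hAv q hCond hExt ?_
  refine ⟨hTot, ?_, ?_, ?_⟩
  · intro x hx
    rw [hE] at hx
    have := hgt x hx
    simpa only [hq, Nat.unpair_pair] using this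
  · intro n
    rw [hE]
    obtain ⟨x, hxA, hxgt⟩ := hinf.exists_gt n
    exact ⟨x, hxgt, hxA⟩
  · rw [hE]
    exact hSide

/-! ### Infinite computable subsets of infinite c.e. sets -/

theorem exists_computable_subset (S : Set ℕ) (cs : Nat.Partrec.Code)
    (hdom : ∀ x, (cs.eval x).Dom ↔ x ∈ S) (hinf : S.Infinite) :
    ∃ (A : Set ℕ) (oc : OCode), A ⊆ S ∧ A.Infinite ∧
      ∀ (g : ℕ →. ℕ) (x : ℕ), evalo g oc x = Part.some (χ A x) := by
  classical
  set enum : ℕ → Option ℕ := fun k =>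
    bif (Nat.Partrec.Code.evaln k.unpair.1 cs k.unpair.2).isSome then some k.unpair.2
    else none with henum_def
  set A : Set ℕ :=
    {x | ∃ k, enum k = some x ∧ ∀ j < k, ∀ v, enum j = some v → v < x} with hA_def
  have henum_S : ∀ {k x}, enum k = some x → x ∈ S := by
    intro k x h
    rw [henum_def] at h
    by_cases hs : (Nat.Partrec.Code.evaln k.unpair.1 cs k.unpair.2).isSome
    · simp only [hs, cond_true, Option.some.injEq] at h
      subst h
      obtain ⟨v, hv⟩ := Option.isSome_iff_exists.1 hs
      exact (hdom _).1 (Part.dom_iff_mem.2 ⟨v, Nat.Partrec.Code.evaln_sound hv⟩)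
    · simp only [Bool.not_eq_true] at hs
      simp [hs] at h
  have hsubS : A ⊆ S := by
    rintro x ⟨k, hk, -⟩
    exact henum_S hk
  have hP : ∀ x : ℕ, ∃ k, ∃ v, enum k = some v ∧ x ≤ v := by
    intro x
    obtain ⟨v, hvS, hvgt⟩ := hinf.exists_gt x
    have hvd : (cs.eval v).Dom := (hdom v).2 hvS
    obtain ⟨u, hu⟩ := Part.dom_iff_mem.1 hvd
    obtain ⟨s, hs⟩ := Nat.Partrec.Code.evaln_complete.1 hu
    refine ⟨Nat.pair s v, v, ?_, le_of_lt hvgt⟩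
    rw [henum_def]
    simp only [Nat.unpair_pair]
    rw [Option.mem_def] at hs
    simp [hs]
  -- the bool test
  set hitb : ℕ → ℕ → Bool := fun x k => ((enum k).map fun v => decide (x ≤ v)).getD false
    with hhitb_def
  have hitb_iff : ∀ x k, hitb x k = true ↔ ∃ v, enum k = some v ∧ x ≤ v := by
    intro x k
    rw [hhitb_def]
    cases h : enum k <;> simp [h]
  have hPb : ∀ x : ℕ, ∃ k, hitb x k = true := by
    intro x
    obtain ⟨k, v, h1, h2⟩ := hP x
    exact ⟨k, (hitb_iff x k).2 ⟨v, h1, h2⟩⟩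
  -- characterization of A via the least hit
  have hA_iff : ∀ x, x ∈ A ↔ enum (Nat.find (hPb x)) = some x := by
    intro x
    constructor
    · rintro ⟨k, hk, hmin⟩
      have hPk : hitb x k = true := (hitb_iff x k).2 ⟨x, hk, le_refl x⟩
      have hle : Nat.find (hPb x) ≤ k := Nat.find_min' _ hPk
      rcases lt_or_eq_of_le hle with hlt | heq
      · exfalso
        obtain ⟨v, hv, hxv⟩ := (hitb_iff x _).1 (Nat.find_spec (hPb x))
        exact absurd (hmin _ hlt v hv) (not_lt.2 hxv)
      · rw [heq]; exact hk
    · intro h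
      refine ⟨Nat.find (hPb x), h, ?_⟩
      intro j hj v hv
      have := Nat.find_min (hPb x) hj
      rw [hitb_iff] at this
      by_contra hvx
      exact this ⟨v, hv, not_lt.1 hvx⟩
  -- A is infinite
  have hAinf : A.Infinite := by
    refine Set.infinite_of_forall_exists_gt fun n => ?_
    have hPn := hPb (n + 1)
    set k₀ := Nat.find hPn with hk₀
    obtain ⟨v, hv, hnv⟩ := (hitb_iff (n + 1) k₀).1 (Nat.find_spec hPn)
    refine ⟨v, ?_, by omega⟩
    refine ⟨k₀, hv, ?_⟩
    intro j hj u hu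
    have := Nat.find_min hPn hj
    rw [hitb_iff] at this
    have : ¬ (n + 1 ≤ u) := fun hle => this ⟨u, hu, hle⟩
    omega
  -- the partial function computing χ_A
  set f : ℕ →. ℕ := fun x => (Nat.rfind fun k => Part.some (hitb x k)).map
    fun k => if enum k = some x then 1 else 0 with hf_def
  have hf_eq : ∀ x, f x = Part.some (if x ∈ A then 1 else 0) := by
    intro x
    have hr : Nat.rfind (fun k => Part.some (hitb x k)) = Part.some (Nat.find (hPb x)) := by
      apply Part.eq_some_iff.2
      refine Nat.mem_rfind.2 ?_
      refine ⟨by simp [Nat.find_spec (hPb x)], ?_⟩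
      intro m hm
      simp [Nat.find_min (hPb x) hm]
    rw [hf_def]
    simp only [hr, Part.map_some]
    congr 1
    by_cases hx : x ∈ A
    · rw [if_pos ((hA_iff x).1 hx), if_pos hx]
    · rw [if_neg (fun h => hx ((hA_iff x).2 h)), if_neg hx]
  -- computability
  have henum_pr : Primrec enum := by
    rw [henum_def]
    have h1 : Primrec fun k : ℕ =>
        (Nat.Partrec.Code.evaln k.unpair.1 cs k.unpair.2).isSome :=
      Primrec.option_isSome.comp
        (Nat.Partrec.Code.primrec_evaln.comp
          (((Primrec.fst.comp Primrec.unpair).pair (Primrec.const cs)).pair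
            (Primrec.snd.comp Primrec.unpair)))
    exact Primrec.cond h1
      (Primrec.option_some.comp (Primrec.snd.comp Primrec.unpair))
      (Primrec.const none)
  have hhitb_pr : Primrec₂ hitb := by
    rw [hhitb_def]
    have h1 : Primrec fun z : ℕ × ℕ => enum z.2 := henum_pr.comp Primrec.snd
    have h2 : Primrec₂ fun (z : ℕ × ℕ) (v : ℕ) => decide (z.1 ≤ v) :=
      Primrec.nat_le.decide.comp (Primrec.fst.comp Primrec.fst) Primrec.snd
    exact (Primrec.option_getD).comp (Primrec.option_map h1 h2) (Primrec.const false)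
  have hmap_pr : Primrec₂ fun (x k : ℕ) => if enum k = some x then (1 : ℕ) else 0 := by
    refine Primrec.ite ?_ (Primrec.const 1) (Primrec.const 0)
    exact Primrec.eq.comp (henum_pr.comp Primrec.snd) (Primrec.option_some.comp Primrec.fst)
  have hf_part : Partrec f := by
    rw [hf_def]
    exact Partrec.map (Partrec.rfind (hhitb_pr.to_comp.partrec₂)) hmap_pr.to_comp
  obtain ⟨c, hc⟩ := Nat.Partrec.Code.exists_code.1 (Partrec.nat_iff.1 hf_part)
  refine ⟨A, embedC c, hsubS, hAinf, ?_⟩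
  intro g x
  rw [evalo_embedC, hc, hf_eq]
  by_cases hx : x ∈ A <;> simp [hx, χ]
end MathiasGenerics

namespace MathiasGenerics

/-- Every Mathias `3`-generic set is cohesive: for each c.e. set `W`, either
`G ⊆* W` or `G ⊆* Wᶜ`. -/
theorem generic_cohesive (G : Set ℕ) (hG : MGen 3 G) :
    ∀ W : Set ℕ, CeIn ∅ W → (G \ W).Finite ∨ (G \ Wᶜ).Finite := by
  intro W hWce
  obtain ⟨w, hW⟩ := hWce
  have hWmem : ∀ x, x ∈ W ↔ (evalo (χp ∅) w x).Dom := fun x => by rw [hW]; exact Iff.rfl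
  rcases hG (CohC w) (sigma3_CohC w) (condSet_CohC w) with
    ⟨p, hpC, hSat⟩ | ⟨p₀, hp₀, hSat, hAv⟩
  · -- G meets the condition set
    obtain ⟨hT, hO, hI, hS⟩ := hpC
    obtain ⟨hDsub, hsub⟩ := hSat
    rcases hS with hS | hS
    · left
      refine ((condD p).finite_toSet).subset ?_
      rintro x ⟨hxG, hxW⟩
      rcases hsub hxG with hx | hx
      · exact hx
      · exact absurd ((hWmem x).2 (hS x hx)) hxW
    · right
      refine ((condD p).finite_toSet).subset ?_
      rintro x ⟨hxG, hxW⟩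
      rcases hsub hxG with hx | hx
      · exact hx
      · rw [Set.notMem_compl_iff] at hxW
        exact absurd ((hWmem x).1 hxW) (hS x hx)
  · -- G avoids the condition set: impossible by density
    exfalso
    obtain ⟨⟨hTot, hOrd⟩, hInf⟩ := hp₀
    have hevE : Partrec (projC (decodeOC p₀.unpair.2)).eval :=
      Partrec.nat_iff.2 (Nat.Partrec.Code.exists_code.2 ⟨_, rfl⟩)
    have hevW : Partrec (projC w).eval :=
      Partrec.nat_iff.2 (Nat.Partrec.Code.exists_code.2 ⟨_, rfl⟩)
    by_cases hEW : (condE p₀ ∩ W).Infinite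
    · -- E ∩ W infinite: extend inside W
      have hSinf : ((condE p₀ ∩ W) ∩ {x | p₀.unpair.1 < x}).Infinite := by
        have heq : (condE p₀ ∩ W) ∩ {x | p₀.unpair.1 < x}
            = (condE p₀ ∩ W) \ Set.Iic p₀.unpair.1 := by
          ext x
          simp [Set.mem_Iic, not_le, and_assoc]
        rw [heq]
        exact hEW.diff (Set.finite_Iic _)
      have hinner : Partrec₂ fun (x v : ℕ) =>
          bif decide (v = 1) then (projC w).eval x else Part.none := by
        refine Partrec.cond ?_ (hevW.comp Computable.fst) Partrec.none
        exact (Primrec.eq.comp Primrec.snd (Primrec.const 1)).decide.to_comp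
      have houter : Partrec fun x : ℕ => bif decide (p₀.unpair.1 < x) then
          ((projC (decodeOC p₀.unpair.2)).eval x).bind
            (fun v => bif decide (v = 1) then (projC w).eval x else Part.none)
          else Part.none := by
        refine Partrec.cond ?_ (hevE.bind hinner) Partrec.none
        exact (Primrec.nat_lt.comp (Primrec.const p₀.unpair.1) Primrec.id).decide.to_comp
      obtain ⟨cs, hcs⟩ := Nat.Partrec.Code.exists_code.1 (Partrec.nat_iff.1 houter)
      have hdom : ∀ x, (cs.eval x).Dom ↔
          x ∈ (condE p₀ ∩ W) ∩ {x | p₀.unpair.1 < x} := by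
        intro x
        rw [hcs]
        simp only []
        by_cases h1 : p₀.unpair.1 < x
        · simp only [h1, decide_true, cond_true]
          rcases hTot x with h0 | h0
          · rw [eval_projC, h0, Part.bind_some]
            constructor
            · intro hd
              exact hd.elim
            · rintro ⟨⟨hxE, -⟩, -⟩
              have h2 : evalo (χp ∅) (decodeOC p₀.unpair.2) x = Part.some 1 := hxE
              rw [h0] at h2
              simp at h2
          · rw [eval_projC, h0, Part.bind_some]
            show ((projC w).eval x).Dom ↔ _
            rw [eval_projC]
            constructor
            · intro hd
              exact ⟨⟨h0, (hWmem x).2 hd⟩, h1⟩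
            · rintro ⟨⟨-, hxW⟩, -⟩
              exact (hWmem x).1 hxW
        · simp only [h1, decide_false, cond_false]
          constructor
          · intro hd
            exact hd.elim
          · rintro ⟨-, hx⟩
            exact absurd hx h1
      obtain ⟨A, oc, hAsub, hAinf, hoc⟩ :=
        exists_computable_subset _ cs hdom hSinf
      refine avoid_contra w p₀ ⟨⟨hTot, hOrd⟩, hInf⟩ hAv A oc hoc ?_ hAinf ?_ ?_
      · exact fun x hx => (hAsub hx).1.1
      · exact fun x hx => (hAsub hx).2
      · exact Or.inl fun x hx => (hWmem x).1 (hAsub hx).1.2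
    · -- E ∩ W finite: extend inside Wᶜ
      have hfin : (condE p₀ ∩ W).Finite := Set.not_infinite.1 hEW
      obtain ⟨B, hB⟩ := hfin.bddAbove
      set B' := max B p₀.unpair.1 with hB'
      have hAinf : ({x | x ∈ condE p₀ ∧ B' < x} : Set ℕ).Infinite := by
        have heq : ({x | x ∈ condE p₀ ∧ B' < x} : Set ℕ)
            = condE p₀ \ Set.Iic B' := by
          ext x
          simp [Set.mem_Iic, not_le]
        rw [heq]
        exact hInf.diff (Set.finite_Iic _)
      have hpart : Partrec fun x : ℕ => bif decide (x ≤ B') then Part.some 0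
          else (projC (decodeOC p₀.unpair.2)).eval x := by
        refine Partrec.cond ?_ ((Computable.const 0).partrec) hevE
        exact (Primrec.nat_le.comp Primrec.id (Primrec.const B')).decide.to_comp
      obtain ⟨c2, hc2⟩ := Nat.Partrec.Code.exists_code.1 (Partrec.nat_iff.1 hpart)
      have hoc2 : ∀ (g : ℕ →. ℕ) (x : ℕ), evalo g (embedC c2) x
          = Part.some (χ {x | x ∈ condE p₀ ∧ B' < x} x) := by
        intro g x
        rw [evalo_embedC, hc2]
        by_cases hx : x ≤ B'
        · simp only [hx, decide_true, cond_true]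
          rw [χ_neg (fun h => by have := h.2; omega)]
        · simp only [hx, decide_false, cond_false, eval_projC]
          rcases hTot x with h0 | h0
          · rw [h0, χ_neg (fun h => by
              have h2 : evalo (χp ∅) (decodeOC p₀.unpair.2) x = Part.some 1 := h.1
              rw [h0] at h2
              simp at h2)]
          · rw [h0, χ_pos (⟨h0, by omega⟩ : x ∈ {x | x ∈ condE p₀ ∧ B' < x})]
      refine avoid_contra w p₀ ⟨⟨hTot, hOrd⟩, hInf⟩ hAv _ (embedC c2) hoc2 ?_ hAinf ?_ ?_
      · exact fun x hx => hx.1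
      · intro x hx
        have := hx.2
        omega
      · refine Or.inr fun x hx hdom => ?_
        have hxW : x ∈ W := (hWmem x).2 hdom
        have hle : x ≤ B := hB ⟨hx.1, hxW⟩
        have := hx.2
        omega

end MathiasGenerics
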